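/- Let n = n1 + n2 with n1, n2 ≥ 1, let G be the complete split graph with clique V1 and independent set V2 and edge set E, and let P be the corresponding polytope of Theorem 3 (McCormick upper bounds, lower bounds y_{ij} ≥ x_i + x_j − 1 for i ∈ V1, j ∈ V2, and the listed clique inequalities). For x ∈ [0,1]^n write LB_P(x) = min{∑_{{i,j}∈E} y_{ij} : (x,y) ∈ P}. Suppose there exists x ∈ [0,1]^n such that for all Lebesgue-measurable sets X_1, …, X_n ⊆ [0,1] with μ(X_i) = x_i for all i one has LB_P(x) < ∑_{{i,j}∈E} μ(X_i ∩ X_j). Then there exists such a vector x with 0 < x_i < 1 for all i ∈ {1,…,n}. -/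

import Mathlib

open Finset

/-- Membership in the polytope `P` of Theorem 3 for the complete split graph with clique
`V1 = {1,…,n1}` and independent set `V2 = {n1+1,…,n1+n2}`: McCormick bounds
`0 ≤ y_{ij} ≤ min{x_i,x_j}` for all pairs, lower bounds `y_{ij} ≥ x_i + x_j - 1` for
`i ∈ V1`, `j ∈ V2`, and the clique inequalities
`y(E*(V1 ∪ S)) ≥ α x(V1 ∪ S) - α(α+1)/2` for `S ⊆ V2`, `|S| ≤ n1 - 1`, `1 ≤ α ≤ n1 - 1`. -/
def memPSplit (n1 n2 : ℕ) (x : ℕ → ℝ) (y : ℕ → ℕ → ℝ) : Prop :=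
  (∀ i ∈ Finset.Icc 1 (n1 + n2), 0 ≤ x i ∧ x i ≤ 1) ∧
  (∀ i ∈ Finset.Icc 1 (n1 + n2), ∀ j ∈ Finset.Icc 1 (n1 + n2), i < j →
      0 ≤ y i j ∧ y i j ≤ min (x i) (x j)) ∧
  (∀ i ∈ Finset.Icc 1 n1, ∀ j ∈ Finset.Icc (n1 + 1) (n1 + n2),
      x i + x j - 1 ≤ y i j) ∧
  (∀ S ⊆ Finset.Icc (n1 + 1) (n1 + n2), S.card ≤ n1 - 1 →
    ∀ α : ℕ, 1 ≤ α → α ≤ n1 - 1 →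
      (α : ℝ) * (∑ i ∈ Finset.Icc 1 n1 ∪ S, x i) - (α : ℝ) * ((α : ℝ) + 1) / 2 ≤
        ∑ i ∈ Finset.Icc 1 n1 ∪ S,
          ∑ j ∈ (Finset.Icc 1 n1 ∪ S).filter (fun j => i < j), y i j)

/-- The sum of the `y`-variables over all edges of the complete split graph. -/
noncomputable def edgeSumSplit (n1 n2 : ℕ) (y : ℕ → ℕ → ℝ) : ℝ :=
  ∑ i ∈ Finset.Icc 1 n1, ∑ j ∈ Finset.Icc (i + 1) (n1 + n2), y i j

/-- The quadratic function `f(x) = ∑_{ij ∈ E} x_i x_j` for the complete split graph. -/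
noncomputable def fSplit (n1 n2 : ℕ) (x : ℕ → ℝ) : ℝ :=
  ∑ i ∈ Finset.Icc 1 n1, ∑ j ∈ Finset.Icc (i + 1) (n1 + n2), x i * x j

open MeasureTheory

/-- `LB_P(x)`: the minimum of `∑_{ij ∈ E} y_{ij}` over the fiber of `P` above `x`. -/
noncomputable def LBSplit (n1 n2 : ℕ) (x : ℕ → ℝ) : ℝ :=
  sInf {z : ℝ | ∃ y : ℕ → ℕ → ℝ, memPSplit n1 n2 x y ∧ z = edgeSumSplit n1 n2 y}

open Finset MeasureTheory
set_option linter.unusedSectionVars false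

lemma pair_count (T : Finset ℕ) :
    (∑ i ∈ T, ((T.filter (fun j => i < j)).card : ℝ)) = T.card * (T.card - 1) / 2 := by
  induction T using Finset.induction_on_max with
  | empty => simp
  | insert a s ha ih =>
      have hna : a ∉ s := fun h => lt_irrefl a (ha a h)
      rw [Finset.sum_insert hna]
      have h1 : ((insert a s).filter (fun j => a < j)) = ∅ := by
        ext j
        simp only [Finset.mem_filter, Finset.mem_insert, Finset.notMem_empty, iff_false, not_and]
        rintro (rfl | hj)
        · exact lt_irrefl j
        · exact fun h => absurd h (not_lt.2 (ha j hj).le)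
      have h2 : ∀ i ∈ s, ((insert a s).filter (fun j => i < j))
          = insert a (s.filter (fun j => i < j)) := by
        intro i hi
        ext j
        simp only [Finset.mem_filter, Finset.mem_insert]
        constructor
        · rintro ⟨rfl | hj, hlt⟩
          · exact Or.inl rfl
          · exact Or.inr ⟨hj, hlt⟩
        · rintro (rfl | ⟨hj, hlt⟩)
          · exact ⟨Or.inl rfl, ha i hi⟩
          · exact ⟨Or.inr hj, hlt⟩
      have h3 : ∑ i ∈ s, (((insert a s).filter (fun j => i < j)).card : ℝ)
          = ∑ i ∈ s, ((s.filter (fun j => i < j)).card + 1 : ℝ) := by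
        apply Finset.sum_congr rfl
        intro i hi
        rw [h2 i hi, Finset.card_insert_of_notMem (fun h => hna (Finset.filter_subset _ _ h))]
        push_cast; ring
      rw [h1, h3, Finset.sum_add_distrib, ih, Finset.sum_const, Finset.card_insert_of_notMem hna,
        Finset.card_empty]
      push_cast
      ring

lemma binom_bound (t a : ℕ) :
    (a : ℝ) * t - a * (a + 1) / 2 ≤ t * (t - 1) / 2 := by
  rcases le_total t a with h | h
  · have : (t : ℝ) ≤ a := by exact_mod_cast h
    nlinarith [Nat.cast_nonneg (α := ℝ) t, Nat.cast_nonneg (α := ℝ) a]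
  · rcases Nat.eq_or_lt_of_le h with rfl | h'
    · apply le_of_eq; ring
    · have h1 : (a : ℝ) + 1 ≤ t := by exact_mod_cast h'
      nlinarith [mul_nonneg (by linarith : (0:ℝ) ≤ (t:ℝ) - a) (by linarith : (0:ℝ) ≤ (t:ℝ) - a - 1)]

section Cells
variable (n : ℕ) (X : ℕ → Set ℝ)

noncomputable def cellOf (A : Finset ℕ) : Set ℝ :=
  Set.Icc 0 1 ∩ ⋂ i ∈ Finset.Icc 1 n, (if i ∈ A then X i else (X i)ᶜ)

lemma cellOf_subset (A : Finset ℕ) : cellOf n X A ⊆ Set.Icc 0 1 := Set.inter_subset_left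

lemma cellOf_meas (hX : ∀ i ∈ Finset.Icc 1 n, MeasurableSet (X i)) (A : Finset ℕ) :
    MeasurableSet (cellOf n X A) := by
  apply measurableSet_Icc.inter
  apply MeasurableSet.biInter (Finset.Icc 1 n).countable_toSet
  intro i hi
  by_cases h : i ∈ A
  · simpa [h] using hX i hi
  · simpa [h] using (hX i hi).compl

lemma cellOf_fin (A : Finset ℕ) : volume (cellOf n X A) ≠ ⊤ := by
  apply ne_top_of_le_ne_top _ (measure_mono (cellOf_subset n X A))
  simp [Real.volume_Icc]

lemma mem_cellOf_iff {A : Finset ℕ} {t : ℝ} :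
    t ∈ cellOf n X A ↔ t ∈ Set.Icc (0:ℝ) 1 ∧ ∀ i ∈ Finset.Icc 1 n,
      (i ∈ A → t ∈ X i) ∧ (i ∉ A → t ∉ X i) := by
  unfold cellOf
  rw [Set.mem_inter_iff, Set.mem_iInter₂]
  constructor
  · rintro ⟨h0, h⟩
    refine ⟨h0, fun i hi => ?_⟩
    have := h i hi
    by_cases hA : i ∈ A
    · rw [if_pos hA] at this; exact ⟨fun _ => this, fun h' => absurd hA h'⟩
    · rw [if_neg hA] at this; exact ⟨fun h' => absurd h' hA, fun _ => this⟩
  · rintro ⟨h0, h⟩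
    refine ⟨h0, fun i hi => ?_⟩
    by_cases hA : i ∈ A
    · rw [if_pos hA]; exact (h i hi).1 hA
    · rw [if_neg hA]; exact (h i hi).2 hA

lemma cellOf_disj {A B : Finset ℕ} (hA : A ⊆ Finset.Icc 1 n) (hB : B ⊆ Finset.Icc 1 n)
    (hne : A ≠ B) : Disjoint (cellOf n X A) (cellOf n X B) := by
  obtain ⟨i, hi⟩ : ∃ i, ¬ (i ∈ A ↔ i ∈ B) := by
    by_contra h; push_neg at h; exact hne (Finset.ext fun j => h j)
  rw [Set.disjoint_left]
  intro t htA htB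
  rw [mem_cellOf_iff] at htA htB
  by_cases hiA : i ∈ A
  · have hiB : i ∉ B := fun h => hi ⟨fun _ => h, fun _ => hiA⟩
    exact (htB.2 i (hA hiA)).2 hiB ((htA.2 i (hA hiA)).1 hiA)
  · have hiB : i ∈ B := by
      by_contra h
      exact hi ⟨fun h' => absurd h' hiA, fun h' => absurd h' h⟩
    exact (htA.2 i (hB hiB)).2 hiA ((htB.2 i (hB hiB)).1 hiB)

lemma vol_split (hX : ∀ i ∈ Finset.Icc 1 n, MeasurableSet (X i))
    (S : Set ℝ) (hS : MeasurableSet S) (hSs : S ⊆ Set.Icc 0 1) :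
    volume S = ∑ A ∈ (Finset.Icc 1 n).powerset, volume (S ∩ cellOf n X A) := by
  classical
  have hcover : S = ⋃ A ∈ (Finset.Icc 1 n).powerset, (S ∩ cellOf n X A) := by
    apply Set.Subset.antisymm
    · intro t ht
      refine Set.mem_biUnion (Finset.mem_powerset.2 (Finset.filter_subset (fun i => t ∈ X i) _))
        ⟨ht, (mem_cellOf_iff n X).2 ⟨hSs ht, fun i hi => ?_⟩⟩
      constructor
      · intro h; exact (Finset.mem_filter.1 h).2
      · intro h h'; exact h (Finset.mem_filter.2 ⟨hi, h'⟩)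
    · exact Set.iUnion₂_subset fun A _ => Set.inter_subset_left
  conv_lhs => rw [hcover]
  apply measure_biUnion_finset
  · intro A hAm B hBm hne
    exact ((cellOf_disj n X (Finset.mem_powerset.1 hAm) (Finset.mem_powerset.1 hBm)
      hne).mono Set.inter_subset_right Set.inter_subset_right)
  · exact fun A _ => hS.inter (cellOf_meas n X hX A)

end Cells

section CM
variable (n : ℕ) (X : ℕ → Set ℝ)
variable (hX : ∀ i ∈ Finset.Icc 1 n, MeasurableSet (X i))
variable (hXs : ∀ i ∈ Finset.Icc 1 n, X i ⊆ Set.Icc 0 1)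

noncomputable def cm (A : Finset ℕ) : ℝ := (volume (cellOf n X A)).toReal

lemma cm_nonneg (A : Finset ℕ) : 0 ≤ cm n X A := ENNReal.toReal_nonneg

include hX hXs in
lemma cm_sum : ∑ A ∈ (Finset.Icc 1 n).powerset, cm n X A = 1 := by
  have h := vol_split n X hX (Set.Icc 0 1) measurableSet_Icc subset_rfl
  have h2 : ∀ A ∈ (Finset.Icc 1 n).powerset,
      volume (Set.Icc (0:ℝ) 1 ∩ cellOf n X A) = volume (cellOf n X A) := by
    intro A _
    rw [Set.inter_eq_self_of_subset_right (cellOf_subset n X A)]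
  rw [Finset.sum_congr rfl h2] at h
  have := congrArg ENNReal.toReal h
  rw [ENNReal.toReal_sum (fun A _ => cellOf_fin n X A)] at this
  simpa [cm, Real.volume_Icc, eq_comm] using this

include hX hXs in
lemma cm_marg {i : ℕ} (hi : i ∈ Finset.Icc 1 n) :
    (volume (X i)).toReal
      = ∑ A ∈ (Finset.Icc 1 n).powerset.filter (fun A => i ∈ A), cm n X A := by
  have h := vol_split n X hX (X i) (hX i hi) (hXs i hi)
  have h2 : ∀ A ∈ (Finset.Icc 1 n).powerset,
      volume (X i ∩ cellOf n X A) = if i ∈ A then volume (cellOf n X A) else 0 := by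
    intro A hA
    by_cases hiA : i ∈ A
    · rw [if_pos hiA, Set.inter_eq_self_of_subset_right]
      intro t ht
      exact (((mem_cellOf_iff n X).1 ht).2 i hi).1 hiA
    · rw [if_neg hiA]
      have : X i ∩ cellOf n X A = ∅ := by
        apply Set.eq_empty_iff_forall_notMem.2
        rintro t ⟨ht1, ht2⟩
        exact (((mem_cellOf_iff n X).1 ht2).2 i hi).2 hiA ht1
      rw [this, measure_empty]
  rw [Finset.sum_congr rfl h2] at h
  have := congrArg ENNReal.toReal h
  rw [ENNReal.toReal_sum (fun A _ => by split; exacts [cellOf_fin n X A, by simp])] at this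
  rw [this, Finset.sum_filter]
  apply Finset.sum_congr rfl
  intro A _
  split <;> simp [cm]

include hX hXs in
lemma cm_pair {i j : ℕ} (hi : i ∈ Finset.Icc 1 n) (hj : j ∈ Finset.Icc 1 n) :
    (volume (X i ∩ X j)).toReal
      = ∑ A ∈ (Finset.Icc 1 n).powerset.filter (fun A => i ∈ A ∧ j ∈ A), cm n X A := by
  have h := vol_split n X hX (X i ∩ X j) ((hX i hi).inter (hX j hj))
    (fun t ht => hXs i hi ht.1)
  have h2 : ∀ A ∈ (Finset.Icc 1 n).powerset,
      volume ((X i ∩ X j) ∩ cellOf n X A)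
        = if i ∈ A ∧ j ∈ A then volume (cellOf n X A) else 0 := by
    intro A hA
    by_cases hiA : i ∈ A ∧ j ∈ A
    · rw [if_pos hiA, Set.inter_eq_self_of_subset_right]
      intro t ht
      have h' := ((mem_cellOf_iff n X).1 ht).2
      exact ⟨(h' i hi).1 hiA.1, (h' j hj).1 hiA.2⟩
    · rw [if_neg hiA]
      have : (X i ∩ X j) ∩ cellOf n X A = ∅ := by
        apply Set.eq_empty_iff_forall_notMem.2
        rintro t ⟨⟨hti, htj⟩, ht2⟩
        have h' := ((mem_cellOf_iff n X).1 ht2).2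
        rcases Decidable.not_and_iff_or_not.1 hiA with h'' | h''
        · exact (h' i hi).2 h'' hti
        · exact (h' j hj).2 h'' htj
      rw [this, measure_empty]
  rw [Finset.sum_congr rfl h2] at h
  have := congrArg ENNReal.toReal h
  rw [ENNReal.toReal_sum (fun A _ => by split; exacts [cellOf_fin n X A, by simp])] at this
  rw [this, Finset.sum_filter]
  apply Finset.sum_congr rfl
  intro A _
  split <;> simp [cm]

end CM

section SumCells
variable (n : ℕ) (X : ℕ → Set ℝ) (x : ℕ → ℝ)
variable (hX : ∀ i ∈ Finset.Icc 1 n, MeasurableSet (X i))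
variable (hXs : ∀ i ∈ Finset.Icc 1 n, X i ⊆ Set.Icc 0 1)
variable (hres : ∀ i ∈ Finset.Icc 1 n, (volume (X i)).toReal = x i)

include hX hXs hres in
lemma sum_x_cells {C : Finset ℕ} (hC : C ⊆ Finset.Icc 1 n) :
    ∑ i ∈ C, x i = ∑ A ∈ (Finset.Icc 1 n).powerset, ((C ∩ A).card : ℝ) * cm n X A := by
  have h1 : ∀ i ∈ C, x i = ∑ A ∈ (Finset.Icc 1 n).powerset,
      (if i ∈ A then cm n X A else 0) := by
    intro i hi
    rw [← hres i (hC hi), cm_marg n X hX hXs (hC hi), Finset.sum_filter]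
  rw [Finset.sum_congr rfl h1, Finset.sum_comm]
  apply Finset.sum_congr rfl
  intro A _
  rw [Finset.sum_ite, Finset.sum_const_zero, add_zero, Finset.sum_const, nsmul_eq_mul,
    Finset.filter_mem_eq_inter]

include hX hXs in
lemma sum_pairs_cells {C : Finset ℕ} (hC : C ⊆ Finset.Icc 1 n) :
    ∑ i ∈ C, ∑ j ∈ C.filter (fun j => i < j), (volume (X i ∩ X j)).toReal
      = ∑ A ∈ (Finset.Icc 1 n).powerset,
        (((C ∩ A).card : ℝ) * (((C ∩ A).card : ℝ) - 1) / 2) * cm n X A := by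
  have h1 : ∀ i ∈ C, ∀ j ∈ C.filter (fun j => i < j),
      (volume (X i ∩ X j)).toReal = ∑ A ∈ (Finset.Icc 1 n).powerset,
        (if i ∈ A ∧ j ∈ A then cm n X A else 0) := by
    intro i hi j hj
    rw [cm_pair n X hX hXs (hC hi) (hC (Finset.filter_subset _ _ hj)), Finset.sum_filter]
  calc ∑ i ∈ C, ∑ j ∈ C.filter (fun j => i < j), (volume (X i ∩ X j)).toReal
      = ∑ i ∈ C, ∑ j ∈ C.filter (fun j => i < j), ∑ A ∈ (Finset.Icc 1 n).powerset,
          (if i ∈ A ∧ j ∈ A then cm n X A else 0) := by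
        exact Finset.sum_congr rfl fun i hi => Finset.sum_congr rfl fun j hj => h1 i hi j hj
    _ = ∑ A ∈ (Finset.Icc 1 n).powerset, ∑ i ∈ C, ∑ j ∈ C.filter (fun j => i < j),
          (if i ∈ A ∧ j ∈ A then cm n X A else 0) := by
        rw [Finset.sum_comm]
        apply Finset.sum_congr rfl
        intro A _
        rw [Finset.sum_comm]
    _ = _ := by
        apply Finset.sum_congr rfl
        intro A _
        have step1 : ∀ i ∈ C, (∑ j ∈ C.filter (fun j => i < j),
            if i ∈ A ∧ j ∈ A then cm n X A else 0)
            = if i ∈ A then (((C ∩ A).filter (fun j => i < j)).card : ℝ) * cm n X A else 0 := by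
          intro i _
          by_cases hiA : i ∈ A
          · rw [if_pos hiA]
            have e1 : ∑ j ∈ C.filter (fun j => i < j), (if i ∈ A ∧ j ∈ A then cm n X A else 0)
                = ∑ j ∈ (C.filter (fun j => i < j)).filter (fun j => j ∈ A), cm n X A := by
              conv_rhs => rw [Finset.sum_filter]
              exact Finset.sum_congr rfl fun j _ => by simp [hiA]
            have e2 : (C.filter (fun j => i < j)).filter (fun j => j ∈ A)
                = (C ∩ A).filter (fun j => i < j) := by
              ext j
              simp only [Finset.mem_filter, Finset.mem_inter]
              tauto
            rw [e1, e2, Finset.sum_const, nsmul_eq_mul]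
          · rw [if_neg hiA]
            exact Finset.sum_eq_zero fun j _ => by simp [hiA]
        rw [Finset.sum_congr rfl step1, Finset.sum_ite, Finset.sum_const_zero, add_zero,
          Finset.filter_mem_eq_inter, ← Finset.sum_mul, pair_count]

end SumCells

lemma vol_fin {S : Set ℝ} (h : S ⊆ Set.Icc 0 1) : volume S ≠ ⊤ := by
  apply ne_top_of_le_ne_top _ (measure_mono h)
  simp [Real.volume_Icc]

section Feas
variable (n1 n2 : ℕ) (X : ℕ → Set ℝ) (x : ℕ → ℝ)
variable (hx : ∀ i ∈ Finset.Icc 1 (n1 + n2), 0 ≤ x i ∧ x i ≤ 1)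
variable (hX : ∀ i ∈ Finset.Icc 1 (n1 + n2), MeasurableSet (X i))
variable (hXs : ∀ i ∈ Finset.Icc 1 (n1 + n2), X i ⊆ Set.Icc 0 1)
variable (hres : ∀ i ∈ Finset.Icc 1 (n1 + n2), (volume (X i)).toReal = x i)

include hx hX hXs hres in
lemma memP_of_sets :
    memPSplit n1 n2 x (fun i j => (volume (X i ∩ X j)).toReal) := by
  have hsub1 : Finset.Icc 1 n1 ⊆ Finset.Icc 1 (n1 + n2) :=
    Finset.Icc_subset_Icc le_rfl (Nat.le_add_right _ _)
  have hsub2 : Finset.Icc (n1 + 1) (n1 + n2) ⊆ Finset.Icc 1 (n1 + n2) :=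
    Finset.Icc_subset_Icc (Nat.le_add_left 1 n1) le_rfl
  refine ⟨hx, ?_, ?_, ?_⟩
  · intro i hi j hj _
    refine ⟨ENNReal.toReal_nonneg, le_min ?_ ?_⟩
    · rw [← hres i hi]
      exact ENNReal.toReal_mono (vol_fin (hXs i hi)) (measure_mono Set.inter_subset_left)
    · rw [← hres j hj]
      exact ENNReal.toReal_mono (vol_fin (hXs j hj)) (measure_mono Set.inter_subset_right)
  · intro i hi j hj
    have hi' := hsub1 hi
    have hj' := hsub2 hj
    have key := measure_union_add_inter (X i) (hX j hj') (μ := volume)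
    have hfu : volume (X i ∪ X j) ≠ ⊤ :=
      vol_fin (Set.union_subset (hXs i hi') (hXs j hj'))
    have hfi : volume (X i ∩ X j) ≠ ⊤ := vol_fin fun t ht => hXs i hi' ht.1
    have key2 := congrArg ENNReal.toReal key
    rw [ENNReal.toReal_add hfu hfi, ENNReal.toReal_add (vol_fin (hXs i hi'))
      (vol_fin (hXs j hj')), hres i hi', hres j hj'] at key2
    have hle : (volume (X i ∪ X j)).toReal ≤ 1 := by
      have h1 := ENNReal.toReal_mono (by simp [Real.volume_Icc] : volume (Set.Icc (0:ℝ) 1) ≠ ⊤)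
        (measure_mono (Set.union_subset (hXs i hi') (hXs j hj')))
      simpa [Real.volume_Icc] using h1
    dsimp only
    linarith
  · intro S hS _ α hα1 hα2
    have hC : Finset.Icc 1 n1 ∪ S ⊆ Finset.Icc 1 (n1 + n2) :=
      Finset.union_subset hsub1 (hS.trans hsub2)
    rw [sum_pairs_cells (n1 + n2) X hX hXs hC, sum_x_cells (n1 + n2) X x hX hXs hres hC]
    have hone : (α : ℝ) * ((α : ℝ) + 1) / 2
        = ∑ A ∈ (Finset.Icc 1 (n1 + n2)).powerset,
          ((α : ℝ) * ((α : ℝ) + 1) / 2) * cm (n1 + n2) X A := by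
      rw [← Finset.mul_sum, cm_sum (n1 + n2) X hX hXs, mul_one]
    conv_lhs => rw [hone, Finset.mul_sum]
    rw [← Finset.sum_sub_distrib]
    apply Finset.sum_le_sum
    intro A hA
    have hb := binom_bound (((Finset.Icc 1 n1 ∪ S) ∩ A).card) α
    nlinarith [mul_le_mul_of_nonneg_right hb (cm_nonneg (n1 + n2) X A)]

end Feas

def fs (n1 n2 : ℕ) (x : ℕ → ℝ) : Set ℝ :=
  {z : ℝ | ∃ y : ℕ → ℕ → ℝ, memPSplit n1 n2 x y ∧ z = edgeSumSplit n1 n2 y}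

lemma LBSplit_eq (n1 n2 : ℕ) (x : ℕ → ℝ) : LBSplit n1 n2 x = sInf (fs n1 n2 x) := rfl

lemma edge_mem {n1 n2 i j : ℕ} (hi : i ∈ Finset.Icc 1 n1) (hj : j ∈ Finset.Icc (i + 1) (n1 + n2)) :
    i ∈ Finset.Icc 1 (n1 + n2) ∧ j ∈ Finset.Icc 1 (n1 + n2) ∧ i < j := by
  simp only [Finset.mem_Icc] at *
  omega

lemma edgeSum_nonneg {n1 n2 : ℕ} {x : ℕ → ℝ} {y : ℕ → ℕ → ℝ} (hy : memPSplit n1 n2 x y) :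
    0 ≤ edgeSumSplit n1 n2 y := by
  apply Finset.sum_nonneg
  intro i hi
  apply Finset.sum_nonneg
  intro j hj
  obtain ⟨h1, h2, h3⟩ := edge_mem hi hj
  exact (hy.2.1 i h1 j h2 h3).1

lemma fs_bdd (n1 n2 : ℕ) (x : ℕ → ℝ) : BddBelow (fs n1 n2 x) := by
  refine ⟨0, ?_⟩
  rintro z ⟨y, hy, rfl⟩
  exact edgeSum_nonneg hy

lemma LBSplit_nonneg (n1 n2 : ℕ) (x : ℕ → ℝ) : 0 ≤ LBSplit n1 n2 x := by
  rw [LBSplit_eq]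
  apply Real.sInf_nonneg
  rintro z ⟨y, hy, rfl⟩
  exact edgeSum_nonneg hy

lemma fs_nonempty (n1 n2 : ℕ) (x : ℕ → ℝ)
    (hx : ∀ i ∈ Finset.Icc 1 (n1 + n2), 0 ≤ x i ∧ x i ≤ 1) : (fs n1 n2 x).Nonempty := by
  set X : ℕ → Set ℝ := fun i => Set.Icc 0 (x i) with hXdef
  have hX : ∀ i ∈ Finset.Icc 1 (n1 + n2), MeasurableSet (X i) := fun i _ => measurableSet_Icc
  have hXs : ∀ i ∈ Finset.Icc 1 (n1 + n2), X i ⊆ Set.Icc 0 1 :=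
    fun i hi => Set.Icc_subset_Icc le_rfl (hx i hi).2
  have hres : ∀ i ∈ Finset.Icc 1 (n1 + n2), (volume (X i)).toReal = x i := by
    intro i hi
    rw [hXdef]
    simp [Real.volume_Icc, ENNReal.toReal_ofReal (by linarith [(hx i hi).1] : (0:ℝ) ≤ x i - 0)]
    exact (hx i hi).1
  exact ⟨_, ⟨_, memP_of_sets n1 n2 X x hx hX hXs hres, rfl⟩⟩

section Transform
variable {n1 n2 : ℕ} {x : ℕ → ℝ} {y : ℕ → ℕ → ℝ} {ε : ℝ}

lemma memP_transform (h1 : 1 ≤ n1) (hy : memPSplit n1 n2 x y) (hε : 0 < ε) (hε1 : ε ≤ 1) :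
    memPSplit n1 n2 (fun i => (1 - ε) * x i + ε / 2) (fun i j => (1 - ε) * y i j + ε / 4) := by
  obtain ⟨hx, hb, hl, hq⟩ := hy
  have hεnn : (0:ℝ) ≤ 1 - ε := by linarith
  refine ⟨?_, ?_, ?_, ?_⟩
  · intro i hi
    obtain ⟨ha, hb'⟩ := hx i hi
    constructor
    · nlinarith
    · nlinarith
  · intro i hi j hj hij
    obtain ⟨hy0, hymin⟩ := hb i hi j hj hij
    obtain ⟨hxi0, hxi1⟩ := hx i hi
    obtain ⟨hxj0, hxj1⟩ := hx j hj
    constructor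
    · nlinarith
    · have h1' := min_le_left (x i) (x j)
      have h2' := min_le_right (x i) (x j)
      apply le_min
      · nlinarith [le_trans hymin h1']
      · nlinarith [le_trans hymin h2']
  · intro i hi j hj
    have := hl i hi j hj
    dsimp only
    nlinarith
  · intro S hS hcard α hα1 hα2
    have hq' := hq S hS hcard α hα1 hα2
    set C := Finset.Icc 1 n1 ∪ S with hCdef
    have hsx : ∑ i ∈ C, ((1 - ε) * x i + ε / 2)
        = (1 - ε) * ∑ i ∈ C, x i + (ε / 2) * C.card := by
      rw [Finset.sum_add_distrib, ← Finset.mul_sum, Finset.sum_const, nsmul_eq_mul]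
      ring
    have hsy : ∑ i ∈ C, ∑ j ∈ C.filter (fun j => i < j), ((1 - ε) * y i j + ε / 4)
        = (1 - ε) * (∑ i ∈ C, ∑ j ∈ C.filter (fun j => i < j), y i j)
          + (ε / 4) * (C.card * (C.card - 1) / 2) := by
      have : ∀ i ∈ C, ∑ j ∈ C.filter (fun j => i < j), ((1 - ε) * y i j + ε / 4)
          = (1 - ε) * (∑ j ∈ C.filter (fun j => i < j), y i j)
            + (ε / 4) * ((C.filter (fun j => i < j)).card : ℝ) := by
        intro i _
        rw [Finset.sum_add_distrib, ← Finset.mul_sum, Finset.sum_const, nsmul_eq_mul]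
        ring
      rw [Finset.sum_congr rfl this, Finset.sum_add_distrib, ← Finset.mul_sum,
        ← Finset.mul_sum, pair_count]
    have hk : (1 : ℝ) ≤ C.card := by
      have : 1 ∈ C := Finset.mem_union_left _ (by simp [Finset.mem_Icc]; omega)
      have := Finset.card_pos.2 ⟨1, this⟩
      exact_mod_cast this
    dsimp only
    rw [hsx, hsy]
    nlinarith [sq_nonneg (2 * (α:ℝ) - C.card + 1), mul_le_mul_of_nonneg_left hq' hεnn,
      mul_nonneg hε.le (sub_nonneg.2 hk)]

end Transform

noncomputable def Ec (n1 n2 : ℕ) : ℝ :=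
  ∑ i ∈ Finset.Icc 1 n1, ((Finset.Icc (i + 1) (n1 + n2)).card : ℝ)

lemma Ec_nonneg (n1 n2 : ℕ) : 0 ≤ Ec n1 n2 :=
  Finset.sum_nonneg fun i _ => Nat.cast_nonneg _

lemma edgeSum_transform (n1 n2 : ℕ) (y : ℕ → ℕ → ℝ) (ε : ℝ) :
    edgeSumSplit n1 n2 (fun i j => (1 - ε) * y i j + ε / 4)
      = (1 - ε) * edgeSumSplit n1 n2 y + (ε / 4) * Ec n1 n2 := by
  unfold edgeSumSplit Ec
  rw [Finset.mul_sum, Finset.mul_sum, ← Finset.sum_add_distrib]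
  apply Finset.sum_congr rfl
  intro i _
  rw [Finset.sum_add_distrib, ← Finset.mul_sum, Finset.sum_const, nsmul_eq_mul]
  ring

lemma LB_transform (n1 n2 : ℕ) (h1 : 1 ≤ n1) (x : ℕ → ℝ)
    (hx : ∀ i ∈ Finset.Icc 1 (n1 + n2), 0 ≤ x i ∧ x i ≤ 1) {ε : ℝ} (hε : 0 < ε) (hε1 : ε ≤ 1) :
    LBSplit n1 n2 (fun i => (1 - ε) * x i + ε / 2)
      ≤ (1 - ε) * LBSplit n1 n2 x + (ε / 4) * Ec n1 n2 := by
  apply le_of_forall_pos_le_add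
  intro η hη
  obtain ⟨z, hz, hlt⟩ := Real.lt_sInf_add_pos (fs_nonempty n1 n2 x hx) hη
  obtain ⟨y, hy, rfl⟩ := hz
  have hmem : (1 - ε) * edgeSumSplit n1 n2 y + (ε / 4) * Ec n1 n2
      ∈ fs n1 n2 (fun i => (1 - ε) * x i + ε / 2) :=
    ⟨_, memP_transform h1 hy hε hε1, (edgeSum_transform n1 n2 y ε).symm⟩
  have hle := csInf_le (fs_bdd n1 n2 _) hmem
  simp only [LBSplit_eq]
  have hεnn : (0:ℝ) ≤ 1 - ε := by linarith
  nlinarith [mul_le_mul_of_nonneg_left hlt.le hεnn]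

section Realize

lemma sum_coe (s : Finset (Finset ℕ)) (p : Finset ℕ → Prop) [DecidablePred p] (g : Finset ℕ → ℝ) :
    ∑ A ∈ Finset.univ.filter (fun A : {A // A ∈ s} => p A.1), g A.1
      = ∑ A ∈ s.filter p, g A := by
  rw [Finset.sum_filter, Finset.sum_filter, Finset.univ_eq_attach,
    ← Finset.sum_attach s (fun A => if p A then g A else 0)]

lemma sum_coe_all (s : Finset (Finset ℕ)) (g : Finset ℕ → ℝ) :
    ∑ A : {A // A ∈ s}, g A.1 = ∑ A ∈ s, g A := by
  rw [Finset.univ_eq_attach, Finset.sum_attach]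

lemma realize_cellvec (n : ℕ) (f : Finset ℕ → ℝ)
    (hf0 : ∀ A ∈ (Finset.Icc 1 n).powerset, 0 ≤ f A)
    (hf1 : ∑ A ∈ (Finset.Icc 1 n).powerset, f A = 1) :
    ∃ X : ℕ → Set ℝ,
      (∀ i, MeasurableSet (X i)) ∧ (∀ i, X i ⊆ Set.Icc 0 1) ∧
      (∀ i, (volume (X i)).toReal
        = ∑ A ∈ (Finset.Icc 1 n).powerset.filter (fun A => i ∈ A), f A) ∧
      (∀ i j, (volume (X i ∩ X j)).toReal
        = ∑ A ∈ (Finset.Icc 1 n).powerset.filter (fun A => i ∈ A ∧ j ∈ A), f A) := by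
  set P := (Finset.Icc 1 n).powerset with hP
  set lft : Finset ℕ → ℝ :=
    fun A => ∑ B ∈ P.filter (fun B => toColex B < toColex A), f B
    with hlft
  set I : Finset ℕ → Set ℝ := fun A => Set.Ico (lft A) (lft A + f A) with hI
  have hlft0 : ∀ A, 0 ≤ lft A := by
    intro A
    exact Finset.sum_nonneg fun B hB => hf0 B (Finset.filter_subset _ _ hB)
  have hkey : ∀ A ∈ P, ∀ B ∈ P, toColex A < toColex B →
      lft A + f A ≤ lft B := by
    intro A hA B hB hAB
    have hsub : insert A (P.filter (fun C => toColex C < toColex A))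
        ⊆ P.filter (fun C => toColex C < toColex B) := by
      intro C hC
      rcases Finset.mem_insert.1 hC with rfl | hC'
      · exact Finset.mem_filter.2 ⟨hA, hAB⟩
      · obtain ⟨h1, h2⟩ := Finset.mem_filter.1 hC'
        exact Finset.mem_filter.2 ⟨h1, h2.trans hAB⟩
    have hAni : A ∉ P.filter (fun C => toColex C < toColex A) := by
      simp only [Finset.mem_filter]
      exact fun h => lt_irrefl _ h.2
    calc lft A + f A = ∑ C ∈ insert A
          (P.filter (fun C => toColex C < toColex A)), f C := by
          rw [Finset.sum_insert hAni]; ring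
      _ ≤ lft B := Finset.sum_le_sum_of_subset_of_nonneg hsub
          (fun C hC _ => hf0 C ((Finset.mem_filter.1 hC).1))
  have hub : ∀ A ∈ P, lft A + f A ≤ 1 := by
    intro A hA
    have hAni : A ∉ P.filter (fun C => toColex C < toColex A) := by
      simp only [Finset.mem_filter]
      exact fun h => lt_irrefl _ h.2
    calc lft A + f A = ∑ C ∈ insert A
          (P.filter (fun C => toColex C < toColex A)), f C := by
          rw [Finset.sum_insert hAni]; ring
      _ ≤ ∑ C ∈ P, f C := Finset.sum_le_sum_of_subset_of_nonneg
          (Finset.insert_subset hA (Finset.filter_subset _ _)) (fun C hC _ => hf0 C hC)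
      _ = 1 := hf1
  have hdisj : ∀ A ∈ P, ∀ B ∈ P, A ≠ B → Disjoint (I A) (I B) := by
    intro A hA B hB hne
    have htri : toColex A < toColex B ∨
        toColex B < toColex A := by
      rcases lt_trichotomy (toColex A) (toColex B) with h | h | h
      · exact Or.inl h
      · exact absurd (toColex_inj.1 h) hne
      · exact Or.inr h
    rw [hI, Set.disjoint_left]
    rintro t ⟨h1, h2⟩ ⟨h3, h4⟩
    rcases htri with h | h
    · have := hkey A hA B hB h
      linarith
    · have := hkey B hB A hA h
      linarith
  have hIsub : ∀ A ∈ P, I A ⊆ Set.Icc 0 1 := by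
    intro A hA t ht
    obtain ⟨h1, h2⟩ := ht
    exact ⟨le_trans (hlft0 A) h1, le_trans h2.le (hub A hA)⟩
  have hIvol : ∀ A ∈ P, (volume (I A)).toReal = f A := by
    intro A hA
    rw [hI]
    simp only [Real.volume_Ico, add_sub_cancel_left]
    exact ENNReal.toReal_ofReal (hf0 A hA)
  set X : ℕ → Set ℝ := fun i => ⋃ A ∈ P.filter (fun A => i ∈ A), I A with hX
  have hXmeas : ∀ i, MeasurableSet (X i) := by
    intro i
    apply MeasurableSet.biUnion (P.filter (fun A => i ∈ A)).countable_toSet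
    intro A _
    exact measurableSet_Ico
  have hXsub : ∀ i, X i ⊆ Set.Icc 0 1 := by
    intro i t ht
    obtain ⟨U, ⟨A, rfl⟩, hU⟩ := ht
    simp only [Set.mem_iUnion] at hU
    obtain ⟨hA, htA⟩ := hU
    exact hIsub A (Finset.filter_subset _ _ hA) htA
  have hinter : ∀ i j, X i ∩ X j = ⋃ A ∈ P.filter (fun A => i ∈ A ∧ j ∈ A), I A := by
    intro i j
    apply Set.Subset.antisymm
    · rintro t ⟨hti, htj⟩
      simp only [hX, Set.mem_iUnion, Finset.mem_filter] at hti htj ⊢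
      obtain ⟨A, ⟨hAP, hiA⟩, htA⟩ := hti
      obtain ⟨B, ⟨hBP, hjB⟩, htB⟩ := htj
      have : A = B := by
        by_contra hne
        exact Set.disjoint_left.1 (hdisj A hAP B hBP hne) htA htB
      subst this
      exact ⟨A, ⟨hAP, hiA, hjB⟩, htA⟩
    · intro t ht
      simp only [Set.mem_iUnion, Finset.mem_filter] at ht
      obtain ⟨A, ⟨hAP, hiA, hjA⟩, htA⟩ := ht
      constructor
      · simp only [hX, Set.mem_iUnion, Finset.mem_filter]
        exact ⟨A, ⟨hAP, hiA⟩, htA⟩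
      · simp only [hX, Set.mem_iUnion, Finset.mem_filter]
        exact ⟨A, ⟨hAP, hjA⟩, htA⟩
  have hvol_biUnion : ∀ (s : Finset (Finset ℕ)), s ⊆ P →
      (volume (⋃ A ∈ s, I A)).toReal = ∑ A ∈ s, f A := by
    intro s hs
    rw [measure_biUnion_finset ?disj ?meas]
    · rw [ENNReal.toReal_sum (fun A hA => ?_)]
      · exact Finset.sum_congr rfl fun A hA => hIvol A (hs hA)
      · rw [hI]
        simp [Real.volume_Ico]
    case disj =>
      intro A hA B hB hne
      exact hdisj A (hs hA) B (hs hB) hne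
    case meas =>
      intro A _
      exact measurableSet_Ico
  refine ⟨X, hXmeas, hXsub, ?_, ?_⟩
  · intro i
    exact hvol_biUnion _ (Finset.filter_subset _ _)
  · intro i j
    rw [hinter i j]
    exact hvol_biUnion _ (Finset.filter_subset _ _)

end Realize

lemma exists_min_realization (n1 n2 : ℕ) (x : ℕ → ℝ)
    (hx : ∀ i ∈ Finset.Icc 1 (n1 + n2), 0 ≤ x i ∧ x i ≤ 1) :
    ∃ Xs : ℕ → Set ℝ,
      (∀ i ∈ Finset.Icc 1 (n1 + n2), MeasurableSet (Xs i)) ∧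
      (∀ i ∈ Finset.Icc 1 (n1 + n2), Xs i ⊆ Set.Icc 0 1) ∧
      (∀ i ∈ Finset.Icc 1 (n1 + n2), (volume (Xs i)).toReal = x i) ∧
      (∀ X : ℕ → Set ℝ, (∀ i ∈ Finset.Icc 1 (n1 + n2), MeasurableSet (X i)) →
        (∀ i ∈ Finset.Icc 1 (n1 + n2), X i ⊆ Set.Icc 0 1) →
        (∀ i ∈ Finset.Icc 1 (n1 + n2), (volume (X i)).toReal = x i) →
        (∑ i ∈ Finset.Icc 1 n1, ∑ j ∈ Finset.Icc (i + 1) (n1 + n2),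
            (volume (Xs i ∩ Xs j)).toReal)
          ≤ ∑ i ∈ Finset.Icc 1 n1, ∑ j ∈ Finset.Icc (i + 1) (n1 + n2),
            (volume (X i ∩ X j)).toReal) := by
  classical
  set n := n1 + n2 with hn
  set P := (Finset.Icc 1 n).powerset with hPdef
  set obj : ({A : Finset ℕ // A ∈ P} → ℝ) → ℝ :=
    fun g => ∑ i ∈ Finset.Icc 1 n1, ∑ j ∈ Finset.Icc (i + 1) n,
      ∑ A ∈ Finset.univ.filter (fun A : {A : Finset ℕ // A ∈ P} => i ∈ A.1 ∧ j ∈ A.1), g A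
    with hobj
  set K : Set ({A : Finset ℕ // A ∈ P} → ℝ) := {g | (∀ A, 0 ≤ g A) ∧ (∑ A, g A = 1) ∧
      (∀ i ∈ Finset.Icc 1 n,
        ∑ A ∈ Finset.univ.filter (fun A : {A : Finset ℕ // A ∈ P} => i ∈ A.1), g A = x i)}
    with hKdef
  have hmemIcc : ∀ i ∈ Finset.Icc 1 n1, i ∈ Finset.Icc 1 n := by
    intro i hi; simp only [Finset.mem_Icc] at *; omega
  have hmemIcc2 : ∀ i j, i ∈ Finset.Icc 1 n1 → j ∈ Finset.Icc (i + 1) n →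
      j ∈ Finset.Icc 1 n := by
    intro i j hi hj; simp only [Finset.mem_Icc] at *; omega
  have habs : ∀ X : ℕ → Set ℝ,
      (∀ i ∈ Finset.Icc 1 n, MeasurableSet (X i)) →
      (∀ i ∈ Finset.Icc 1 n, X i ⊆ Set.Icc 0 1) →
      (∀ i ∈ Finset.Icc 1 n, (volume (X i)).toReal = x i) →
      (fun A : {A : Finset ℕ // A ∈ P} => cm n X A.1) ∈ K ∧
        (∑ i ∈ Finset.Icc 1 n1, ∑ j ∈ Finset.Icc (i + 1) n, (volume (X i ∩ X j)).toReal)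
          = obj (fun A : {A : Finset ℕ // A ∈ P} => cm n X A.1) := by
    intro X hXm hXs hXr
    constructor
    · refine ⟨fun A => cm_nonneg n X A.1, ?_, ?_⟩
      · exact (sum_coe_all P (cm n X)).trans (cm_sum n X hXm hXs)
      · intro i hi
        exact (sum_coe P (fun A => i ∈ A) (cm n X)).trans
          ((cm_marg n X hXm hXs hi).symm.trans (hXr i hi))
    · refine Finset.sum_congr rfl fun i hi => Finset.sum_congr rfl fun j hj => ?_
      rw [cm_pair n X hXm hXs (hmemIcc i hi) (hmemIcc2 i j hi hj)]
      exact (sum_coe P (fun A => i ∈ A ∧ j ∈ A) (cm n X)).symm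
  have hKclosed : IsClosed K := by
    have e : K = (⋂ A : {A : Finset ℕ // A ∈ P}, {g : {A : Finset ℕ // A ∈ P} → ℝ | 0 ≤ g A})
        ∩ ({g : {A : Finset ℕ // A ∈ P} → ℝ | ∑ A, g A = 1}
          ∩ ⋂ i ∈ Finset.Icc 1 n, {g : {A : Finset ℕ // A ∈ P} → ℝ |
            ∑ A ∈ Finset.univ.filter (fun A : {A : Finset ℕ // A ∈ P} => i ∈ A.1), g A = x i}) := by
      ext g
      simp only [hKdef, Set.mem_setOf_eq, Set.mem_inter_iff, Set.mem_iInter]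
    rw [e]
    refine IsClosed.inter (isClosed_iInter fun A =>
      isClosed_le continuous_const (continuous_apply A)) (IsClosed.inter ?_ ?_)
    · exact isClosed_eq (continuous_finset_sum _ fun A _ => continuous_apply A) continuous_const
    · exact isClosed_iInter fun i => isClosed_iInter fun _ =>
        isClosed_eq (continuous_finset_sum _ fun A _ => continuous_apply A) continuous_const
  have hKcompact : IsCompact K := by
    apply IsCompact.of_isClosed_subset (isCompact_univ_pi fun _ => isCompact_Icc) hKclosed
    intro g hg A _
    refine ⟨hg.1 A, ?_⟩
    have h1 := Finset.single_le_sum (f := g) (fun B _ => hg.1 B) (Finset.mem_univ A)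
    rw [hg.2.1] at h1
    exact h1
  have hcont : Continuous obj := by
    apply continuous_finset_sum
    intro i _
    apply continuous_finset_sum
    intro j _
    exact continuous_finset_sum _ fun A _ => continuous_apply A
  -- nonempty via intervals
  have hX0 : ∃ g, g ∈ K := by
    set X0 : ℕ → Set ℝ := fun i => Set.Icc 0 (x i) with hX0def
    have hX0m : ∀ i ∈ Finset.Icc 1 n, MeasurableSet (X0 i) := fun i _ => measurableSet_Icc
    have hX0s : ∀ i ∈ Finset.Icc 1 n, X0 i ⊆ Set.Icc 0 1 :=
      fun i hi => Set.Icc_subset_Icc le_rfl (hx i hi).2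
    have hX0r : ∀ i ∈ Finset.Icc 1 n, (volume (X0 i)).toReal = x i := by
      intro i hi
      rw [hX0def]
      simp only [Real.volume_Icc, sub_zero]
      exact ENNReal.toReal_ofReal (hx i hi).1
    exact ⟨_, (habs X0 hX0m hX0s hX0r).1⟩
  obtain ⟨g0, hg0⟩ := hX0
  obtain ⟨gK, hgK, hmin⟩ := hKcompact.exists_isMinOn ⟨g0, hg0⟩ hcont.continuousOn
  set f : Finset ℕ → ℝ := fun A => if h : A ∈ P then gK ⟨A, h⟩ else 0 with hfdef
  have hval : ∀ A : {A : Finset ℕ // A ∈ P}, f A.1 = gK A := by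
    intro A
    rw [hfdef]
    simp only [A.2, dif_pos]
  have hf0 : ∀ A ∈ P, 0 ≤ f A := by
    intro A hA
    rw [hfdef]
    simp only [hA, dif_pos]
    exact hgK.1 ⟨A, hA⟩
  have hf1 : ∑ A ∈ P, f A = 1 := by
    rw [← sum_coe_all P f]
    rw [Finset.sum_congr rfl fun A _ => hval A]
    exact hgK.2.1
  obtain ⟨Xs, hXsm, hXss, hXsmarg, hXspair⟩ := realize_cellvec n f hf0 hf1
  refine ⟨Xs, fun i _ => hXsm i, fun i _ => hXss i, ?_, ?_⟩
  · intro i hi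
    rw [hXsmarg i, ← sum_coe P (fun A => i ∈ A) f,
      Finset.sum_congr rfl fun A _ => hval A]
    exact hgK.2.2 i hi
  · intro X hXm hXs2 hXr
    obtain ⟨hgXK, hgXobj⟩ := habs X hXm hXs2 hXr
    have hFXs : (∑ i ∈ Finset.Icc 1 n1, ∑ j ∈ Finset.Icc (i + 1) n,
        (volume (Xs i ∩ Xs j)).toReal) = obj gK := by
      refine Finset.sum_congr rfl fun i _ => Finset.sum_congr rfl fun j _ => ?_
      rw [hXspair i j, ← sum_coe P (fun A => i ∈ A ∧ j ∈ A) f,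
        Finset.sum_congr rfl fun A _ => hval A]
    rw [hFXs, hgXobj]
    exact isMinOn_iff.1 hmin _ hgXK

lemma measure_IVT {A : Set ℝ} (hA : MeasurableSet A) (hAs : A ⊆ Set.Icc 0 1) {b : ℝ}
    (hb0 : 0 ≤ b) (hb : b ≤ (volume A).toReal) :
    ∃ B, MeasurableSet B ∧ B ⊆ A ∧ (volume B).toReal = b := by
  set g : ℝ → ℝ := fun c => (volume (A ∩ Set.Icc 0 c)).toReal with hg
  have hfin : ∀ c, volume (A ∩ Set.Icc 0 c) ≠ ⊤ := fun c => vol_fin fun t ht => hAs ht.1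
  have hmono : ∀ {c d : ℝ}, c ≤ d → g c ≤ g d := by
    intro c d hcd
    exact ENNReal.toReal_mono (hfin d)
      (measure_mono (Set.inter_subset_inter_right _ (Set.Icc_subset_Icc le_rfl hcd)))
  have hlip : ∀ {c d : ℝ}, c ≤ d → g d ≤ g c + (d - c) := by
    intro c d hcd
    have hsub : A ∩ Set.Icc 0 d ⊆ (A ∩ Set.Icc 0 c) ∪ Set.Icc c d := by
      rintro t ⟨htA, ht0, htd⟩
      rcases le_total t c with h | h
      · exact Or.inl ⟨htA, ht0, h⟩
      · exact Or.inr ⟨h, htd⟩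
    have h1 : volume (A ∩ Set.Icc 0 d) ≤ volume (A ∩ Set.Icc 0 c) + volume (Set.Icc c d) :=
      le_trans (measure_mono hsub) (measure_union_le _ _)
    have h2 := ENNReal.toReal_mono (by
        rw [Real.volume_Icc]
        exact ENNReal.add_ne_top.2 ⟨hfin c, ENNReal.ofReal_ne_top⟩) h1
    rw [ENNReal.toReal_add (hfin c) (by rw [Real.volume_Icc]; exact ENNReal.ofReal_ne_top),
      Real.volume_Icc, ENNReal.toReal_ofReal (by linarith)] at h2
    exact h2
  have hcont : Continuous g := by
    apply Metric.continuous_iff.2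
    intro c ε hε
    refine ⟨ε, hε, fun d hd => ?_⟩
    rw [Real.dist_eq] at hd ⊢
    rcases le_total c d with h | h
    · have := hmono h
      have := hlip h
      rw [abs_lt] at hd ⊢
      constructor <;> [linarith [abs_nonneg (d - c)]; linarith [le_abs_self (d - c), hd.2]]
    · have := hmono h
      have := hlip h
      rw [abs_lt] at hd ⊢
      constructor <;> [linarith [neg_abs_le (d - c), hd.1]; linarith]
  have hg0 : g 0 = 0 := by
    rw [hg]
    have : volume (A ∩ Set.Icc 0 0) ≤ volume (Set.Icc (0:ℝ) 0) :=
      measure_mono Set.inter_subset_right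
    simp only [Set.Icc_self, Real.volume_singleton, le_zero_iff] at this
    simp [this]
  have hg1 : g 1 = (volume A).toReal := by
    show (volume (A ∩ Set.Icc 0 1)).toReal = (volume A).toReal
    rw [Set.inter_eq_self_of_subset_left hAs]
  have hmem : b ∈ Set.Icc (g 0) (g 1) := by
    rw [hg0, hg1]
    exact ⟨hb0, hb⟩
  obtain ⟨c, _, hc⟩ := intermediate_value_Icc (by norm_num : (0:ℝ) ≤ 1) hcont.continuousOn hmem
  exact ⟨A ∩ Set.Icc 0 c, hA.inter measurableSet_Icc, Set.inter_subset_left, hc⟩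

lemma measure_adjust {A : Set ℝ} (hA : MeasurableSet A) (hAs : A ⊆ Set.Icc 0 1) {b : ℝ}
    (hb0 : 0 ≤ b) (hb1 : b ≤ 1) :
    ∃ B, MeasurableSet B ∧ B ⊆ Set.Icc 0 1 ∧ (volume B).toReal = b ∧
      (volume (A \ B)).toReal + (volume (B \ A)).toReal ≤ |(volume A).toReal - b| := by
  have hAfin : volume A ≠ ⊤ := vol_fin hAs
  rcases le_total b ((volume A).toReal) with h | h
  · obtain ⟨B, hBm, hBsub, hBvol⟩ := measure_IVT hA hAs hb0 h
    refine ⟨B, hBm, hBsub.trans hAs, hBvol, ?_⟩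
    have hdiff : volume (A \ B) = volume A - volume B :=
      measure_diff hBsub hBm.nullMeasurableSet (ne_top_of_le_ne_top hAfin (measure_mono hBsub))
    have hBA : B \ A = ∅ := by
      rw [Set.diff_eq_empty]
      exact hBsub
    rw [hBA, measure_empty]
    simp only [ENNReal.toReal_zero, add_zero]
    rw [hdiff, ENNReal.toReal_sub_of_le (measure_mono hBsub) hAfin, hBvol]
    rw [abs_of_nonneg (by linarith)]
  · set D := Set.Icc (0:ℝ) 1 \ A with hD
    have hDm : MeasurableSet D := measurableSet_Icc.diff hA
    have hDs : D ⊆ Set.Icc 0 1 := Set.diff_subset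
    have hDvol : (volume D).toReal = 1 - (volume A).toReal := by
      rw [hD, measure_diff hAs hA.nullMeasurableSet hAfin,
        ENNReal.toReal_sub_of_le (measure_mono hAs) (by simp [Real.volume_Icc])]
      simp [Real.volume_Icc]
    obtain ⟨t, htm, htsub, htvol⟩ := measure_IVT hDm hDs (by linarith : (0:ℝ) ≤ b - (volume A).toReal)
      (by rw [hDvol]; linarith)
    have hdisj : Disjoint A t := by
      rw [Set.disjoint_left]
      intro a haA hat
      exact (htsub hat).2 haA
    refine ⟨A ∪ t, hA.union htm, Set.union_subset hAs (htsub.trans hDs), ?_, ?_⟩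
    · rw [measure_union hdisj htm, ENNReal.toReal_add hAfin (vol_fin (htsub.trans hDs)), htvol]
      ring
    · have h1 : A \ (A ∪ t) = ∅ := by
        rw [Set.diff_eq_empty]
        exact Set.subset_union_left
      have h2 : (A ∪ t) \ A ⊆ t := by
        intro a ⟨ha1, ha2⟩
        rcases ha1 with h' | h'
        · exact absurd h' ha2
        · exact h'
      rw [h1, measure_empty]
      simp only [ENNReal.toReal_zero, zero_add]
      have h3 := ENNReal.toReal_mono (vol_fin (htsub.trans hDs)) (measure_mono h2)
      rw [htvol] at h3
      rw [abs_of_nonpos (by linarith)]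
      linarith

lemma inter_perturb {A A' B B' : Set ℝ} (hA : A ⊆ Set.Icc 0 1) (hB : B ⊆ Set.Icc 0 1)
    (hA' : A' ⊆ Set.Icc 0 1) (hB' : B' ⊆ Set.Icc 0 1) :
    (volume (A ∩ B)).toReal ≤ (volume (A' ∩ B')).toReal
      + (volume (A \ A')).toReal + (volume (B \ B')).toReal := by
  have hsub : A ∩ B ⊆ (A' ∩ B') ∪ ((A \ A') ∪ (B \ B')) := by
    rintro t ⟨htA, htB⟩
    by_cases h1 : t ∈ A'
    · by_cases h2 : t ∈ B'
      · exact Or.inl ⟨h1, h2⟩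
      · exact Or.inr (Or.inr ⟨htB, h2⟩)
    · exact Or.inr (Or.inl ⟨htA, h1⟩)
  have h1 : volume (A ∩ B) ≤ volume (A' ∩ B') + (volume (A \ A') + volume (B \ B')) :=
    le_trans (measure_mono hsub) (le_trans (measure_union_le _ _)
      (add_le_add le_rfl (measure_union_le _ _)))
  have f1 : volume (A' ∩ B') ≠ ⊤ := vol_fin fun t ht => hA' ht.1
  have f2 : volume (A \ A') ≠ ⊤ := vol_fin fun t ht => hA ht.1
  have f3 : volume (B \ B') ≠ ⊤ := vol_fin fun t ht => hB ht.1
  have h2 := ENNReal.toReal_mono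
    (ENNReal.add_ne_top.2 ⟨f1, ENNReal.add_ne_top.2 ⟨f2, f3⟩⟩) h1
  rw [ENNReal.toReal_add f1 (ENNReal.add_ne_top.2 ⟨f2, f3⟩), ENNReal.toReal_add f2 f3] at h2
  linarith


theorem bad_vector_in_interior (n1 n2 : ℕ) (h1 : 1 ≤ n1) (h2 : 1 ≤ n2)
    (hex : ∃ x : ℕ → ℝ, (∀ i ∈ Finset.Icc 1 (n1 + n2), 0 ≤ x i ∧ x i ≤ 1) ∧
      ∀ X : ℕ → Set ℝ,
        (∀ i ∈ Finset.Icc 1 (n1 + n2), MeasurableSet (X i)) →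
        (∀ i ∈ Finset.Icc 1 (n1 + n2), X i ⊆ Set.Icc 0 1) →
        (∀ i ∈ Finset.Icc 1 (n1 + n2), (volume (X i)).toReal = x i) →
        LBSplit n1 n2 x <
          ∑ i ∈ Finset.Icc 1 n1, ∑ j ∈ Finset.Icc (i + 1) (n1 + n2),
            (volume (X i ∩ X j)).toReal) :
    ∃ x : ℕ → ℝ, (∀ i ∈ Finset.Icc 1 (n1 + n2), 0 < x i ∧ x i < 1) ∧
      ∀ X : ℕ → Set ℝ,
        (∀ i ∈ Finset.Icc 1 (n1 + n2), MeasurableSet (X i)) →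
        (∀ i ∈ Finset.Icc 1 (n1 + n2), X i ⊆ Set.Icc 0 1) →
        (∀ i ∈ Finset.Icc 1 (n1 + n2), (volume (X i)).toReal = x i) →
        LBSplit n1 n2 x <
          ∑ i ∈ Finset.Icc 1 n1, ∑ j ∈ Finset.Icc (i + 1) (n1 + n2),
            (volume (X i ∩ X j)).toReal := by
  classical
  obtain ⟨x, hx, hbad⟩ := hex
  obtain ⟨Xs, hXsm, hXss, hXsr, hXsmin⟩ := exists_min_realization n1 n2 x hx
  set L := LBSplit n1 n2 x with hLdef
  have hL0 : 0 ≤ L := LBSplit_nonneg n1 n2 x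
  set Mx := ∑ i ∈ Finset.Icc 1 n1, ∑ j ∈ Finset.Icc (i + 1) (n1 + n2),
    (volume (Xs i ∩ Xs j)).toReal with hMxdef
  have hgap : L < Mx := hbad Xs hXsm hXss hXsr
  set E := Ec n1 n2 with hEdef
  have hE0 : 0 ≤ E := Ec_nonneg n1 n2
  set ε := min (1/2 : ℝ) ((Mx - L) / (2 * E + 2)) with hεdef
  have hεpos : 0 < ε := lt_min (by norm_num) (div_pos (by linarith) (by linarith))
  have hεhalf : ε ≤ 1/2 := min_le_left _ _
  have hε1 : ε ≤ 1 := by linarith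
  have hεE : ε * (2 * E + 2) ≤ Mx - L := by
    have h := min_le_right (1/2 : ℝ) ((Mx - L) / (2 * E + 2))
    calc ε * (2 * E + 2) ≤ ((Mx - L) / (2 * E + 2)) * (2 * E + 2) :=
          mul_le_mul_of_nonneg_right h (by linarith)
      _ = Mx - L := div_mul_cancel₀ _ (by linarith)
  refine ⟨fun i => (1 - ε) * x i + ε / 2, ?_, ?_⟩
  · intro i hi
    obtain ⟨h0, h1'⟩ := hx i hi
    constructor
    · nlinarith
    · nlinarith
  · intro X' hX'm hX's hX'r
    have hLB := LB_transform n1 n2 h1 x hx hεpos hε1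
    have hadj : ∀ i ∈ Finset.Icc 1 (n1 + n2), ∃ B : Set ℝ, MeasurableSet B ∧
        B ⊆ Set.Icc 0 1 ∧ (volume B).toReal = x i ∧
        (volume (X' i \ B)).toReal + (volume (B \ X' i)).toReal
          ≤ |(volume (X' i)).toReal - x i| :=
      fun i hi => measure_adjust (hX'm i hi) (hX's i hi) (hx i hi).1 (hx i hi).2
    choose! B hBm hBs hBr hBd using hadj
    have hdist : ∀ i ∈ Finset.Icc 1 (n1 + n2), |(volume (X' i)).toReal - x i| ≤ ε / 2 := by
      intro i hi
      rw [hX'r i hi]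
      obtain ⟨h0, h1'⟩ := hx i hi
      rw [abs_le]
      constructor <;> nlinarith
    have hedge : ∀ i ∈ Finset.Icc 1 n1, ∀ j ∈ Finset.Icc (i + 1) (n1 + n2),
        (volume (B i ∩ B j)).toReal ≤ (volume (X' i ∩ X' j)).toReal + ε := by
      intro i hi j hj
      obtain ⟨hi', hj', _⟩ := edge_mem hi hj
      have hp := inter_perturb (hBs i hi') (hBs j hj') (hX's i hi') (hX's j hj')
      have hdi := hBd i hi'
      have hdj := hBd j hj'
      have hei := hdist i hi'
      have hej := hdist j hj'
      have hnn1 : 0 ≤ (volume (X' i \ B i)).toReal := ENNReal.toReal_nonneg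
      have hnn2 : 0 ≤ (volume (X' j \ B j)).toReal := ENNReal.toReal_nonneg
      linarith
    have hFB : Mx ≤ ∑ i ∈ Finset.Icc 1 n1, ∑ j ∈ Finset.Icc (i + 1) (n1 + n2),
        (volume (B i ∩ B j)).toReal :=
      hXsmin B (fun i hi => hBm i hi) (fun i hi => hBs i hi) (fun i hi => hBr i hi)
    have hsum : ∑ i ∈ Finset.Icc 1 n1, ∑ j ∈ Finset.Icc (i + 1) (n1 + n2),
        (volume (B i ∩ B j)).toReal
        ≤ (∑ i ∈ Finset.Icc 1 n1, ∑ j ∈ Finset.Icc (i + 1) (n1 + n2),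
          (volume (X' i ∩ X' j)).toReal) + ε * E := by
      have step : ∀ i ∈ Finset.Icc 1 n1,
          ∑ j ∈ Finset.Icc (i + 1) (n1 + n2), (volume (B i ∩ B j)).toReal
          ≤ (∑ j ∈ Finset.Icc (i + 1) (n1 + n2), (volume (X' i ∩ X' j)).toReal)
            + ε * ((Finset.Icc (i + 1) (n1 + n2)).card : ℝ) := by
        intro i hi
        calc ∑ j ∈ Finset.Icc (i + 1) (n1 + n2), (volume (B i ∩ B j)).toReal
            ≤ ∑ j ∈ Finset.Icc (i + 1) (n1 + n2),
              ((volume (X' i ∩ X' j)).toReal + ε) :=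
              Finset.sum_le_sum fun j hj => hedge i hi j hj
          _ = _ := by
              rw [Finset.sum_add_distrib, Finset.sum_const, nsmul_eq_mul]
              ring
      calc ∑ i ∈ Finset.Icc 1 n1, ∑ j ∈ Finset.Icc (i + 1) (n1 + n2),
          (volume (B i ∩ B j)).toReal
          ≤ ∑ i ∈ Finset.Icc 1 n1,
            ((∑ j ∈ Finset.Icc (i + 1) (n1 + n2), (volume (X' i ∩ X' j)).toReal)
              + ε * ((Finset.Icc (i + 1) (n1 + n2)).card : ℝ)) :=
            Finset.sum_le_sum step
        _ = _ := by
            rw [Finset.sum_add_distrib, ← Finset.mul_sum]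
            rfl
    nlinarith [mul_nonneg hεpos.le hL0, mul_nonneg hεpos.le hE0]
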